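/- For the CAR algebra A over Z^ν with unique tracial state τ: for every subset I ⊆ Z^ν there exists a unique conditional expectation E_I : A → A(I) satisfying τ(ab) = τ(E_I(a)b) for all b ∈ A(I); moreover for any two subsets I, J one has E_I(A(J)) ⊆ A(I ∩ J) and E_I E_J = E_J E_I = E_{I∩J}. -/

import Mathlib

open scoped ComplexOrder

set_option linter.unusedSectionVars false
set_option linter.unusedVariables false
set_option linter.unreachableTactic false
set_option linter.unusedTactic false
set_option maxHeartbeats 1000000

namespace CARProof

variable {A : Type*} [CStarAlgebra A] {σ : Type*} [LinearOrder σ]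
variable (a : σ → A)
variable (hCAR₁d : ∀ i, star (a i) * a i + a i * star (a i) = 1)
variable (hCAR₁o : ∀ i j, i ≠ j → star (a i) * a j + a j * star (a i) = 0)
variable (hCAR₂ : ∀ i j, a i * a j + a j * a i = 0)

section Base

include hCAR₁d hCAR₁o hCAR₂

lemma sq0 (i : σ) : a i * a i = 0 := by
  have h := hCAR₂ i i
  have h2 : (2:ℂ) • (a i * a i) = 0 := by rw [two_smul]; exact h
  simpa using (smul_eq_zero.mp h2).resolve_left (by norm_num)

lemma star_sq0 (i : σ) : star (a i) * star (a i) = 0 := by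
  have : star (a i * a i) = 0 := by rw [sq0 a hCAR₁d hCAR₁o hCAR₂ i]; simp
  rwa [star_mul] at this

lemma mix1 (i : σ) : star (a i) * a i + a i * star (a i) = 1 := hCAR₁d i

lemma a_star_self (i : σ) : a i * star (a i) = 1 - star (a i) * a i := by
  have := mix1 a hCAR₁d hCAR₁o hCAR₂ i
  exact eq_sub_of_add_eq' this

lemma anticomm (i j : σ) (h : i ≠ j) : a i * a j = -(a j * a i) :=
  eq_neg_of_add_eq_zero_left (hCAR₂ i j)

lemma anticomm_star_left (i j : σ) (h : i ≠ j) : star (a i) * a j = -(a j * star (a i)) := by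
  exact eq_neg_of_add_eq_zero_left (hCAR₁o i j h)

lemma anticomm_star_right (i j : σ) (h : i ≠ j) : a i * star (a j) = -(star (a j) * a i) := by
  exact eq_neg_of_add_eq_zero_right (hCAR₁o j i (Ne.symm h))

lemma anticomm_star_star (i j : σ) (h : i ≠ j) :
    star (a i) * star (a j) = -(star (a j) * star (a i)) := by
  have h0 : star (a j * a i + a i * a j) = 0 := by rw [hCAR₂ j i]; simp
  rw [star_add, star_mul, star_mul] at h0
  exact eq_neg_of_add_eq_zero_left h0

lemma asa_a (i : σ) : a i * star (a i) * a i = a i := by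
  rw [a_star_self a hCAR₁d hCAR₁o hCAR₂ i, sub_mul, one_mul, mul_assoc, sq0 a hCAR₁d hCAR₁o hCAR₂ i,
    mul_zero, sub_zero]

lemma as_a_as (i : σ) : star (a i) * a i * star (a i) = star (a i) := by
  have := congrArg star (asa_a a hCAR₁d hCAR₁o hCAR₂ i)
  simpa [star_mul, mul_assoc] using this

end Base

noncomputable def uu (i : σ) : A := 1 - (2:ℂ) • (star (a i) * a i)
noncomputable def vv (i : σ) : A := a i + star (a i)
noncomputable def UL (L : List σ) : A := (L.map (uu a)).prod

@[simp] lemma UL_nil : UL a ([] : List σ) = 1 := by simp [UL]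

lemma UL_cons (k : σ) (L : List σ) : UL a (k :: L) = uu a k * UL a L := by simp [UL]

lemma uu_sa (i : σ) : star (uu a i) = uu a i := by
  simp [uu, star_smul, star_mul, mul_assoc]

lemma vv_sa (i : σ) : star (vv a i) = vv a i := by simp [vv, add_comm]

section UV

include hCAR₁d hCAR₁o hCAR₂

lemma n_idem (i : σ) : (star (a i) * a i) * (star (a i) * a i) = star (a i) * a i := by
  have h := as_a_as a hCAR₁d hCAR₁o hCAR₂ i
  calc (star (a i) * a i) * (star (a i) * a i)
      = (star (a i) * a i * star (a i)) * a i := by rw [mul_assoc, mul_assoc, mul_assoc]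
    _ = star (a i) * a i := by rw [h]

lemma uu_sq (i : σ) : uu a i * uu a i = 1 := by
  have hn := n_idem a hCAR₁d hCAR₁o hCAR₂ i
  simp only [uu, sub_mul, mul_sub, one_mul, mul_one, smul_mul_assoc, mul_smul_comm, smul_smul, hn]
  module

lemma uu_a_self (i : σ) : uu a i * a i = a i := by
  simp only [uu, sub_mul, one_mul, smul_mul_assoc, mul_assoc, sq0 a hCAR₁d hCAR₁o hCAR₂ i, mul_zero,
    smul_zero, sub_zero]

lemma a_self_uu (i : σ) : a i * uu a i = -(a i) := by
  simp only [uu, mul_sub, mul_one, mul_smul_comm, ← mul_assoc, asa_a a hCAR₁d hCAR₁o hCAR₂ i]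
  module

lemma as_self_uu (i : σ) : star (a i) * uu a i = star (a i) := by
  simp only [uu, mul_sub, mul_one, mul_smul_comm, ← mul_assoc, star_sq0 a hCAR₁d hCAR₁o hCAR₂ i,
    zero_mul, smul_zero, sub_zero]

lemma uu_as_self (i : σ) : uu a i * star (a i) = -(star (a i)) := by
  simp only [uu, sub_mul, one_mul, smul_mul_assoc, as_a_as a hCAR₁d hCAR₁o hCAR₂ i]
  module

lemma uu_comm_a (i j : σ) (h : j ≠ i) : uu a i * a j = a j * uu a i := by
  have h1 : star (a i) * a i * a j = a j * (star (a i) * a i) := by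
    rw [mul_assoc, anticomm a hCAR₁d hCAR₁o hCAR₂ i j (Ne.symm h), mul_neg, ← mul_assoc,
      anticomm_star_left a hCAR₁d hCAR₁o hCAR₂ i j (Ne.symm h)]
    simp [mul_assoc]
  simp only [uu, sub_mul, mul_sub, one_mul, mul_one, smul_mul_assoc, mul_smul_comm, h1]

lemma uu_comm_as (i j : σ) (h : j ≠ i) : uu a i * star (a j) = star (a j) * uu a i := by
  have h1 : star (a i) * a i * star (a j) = star (a j) * (star (a i) * a i) := by
    rw [mul_assoc, anticomm_star_right a hCAR₁d hCAR₁o hCAR₂ i j (Ne.symm h), mul_neg, ← mul_assoc,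
      anticomm_star_star a hCAR₁d hCAR₁o hCAR₂ i j (Ne.symm h)]
    simp [mul_assoc]
  simp only [uu, sub_mul, mul_sub, one_mul, mul_one, smul_mul_assoc, mul_smul_comm, h1]

lemma uu_comm_uu (i j : σ) : uu a i * uu a j = uu a j * uu a i := by
  rcases eq_or_ne j i with rfl | h
  · rfl
  have h1 : uu a i * (star (a j) * a j) = (star (a j) * a j) * uu a i := by
    rw [← mul_assoc, uu_comm_as a hCAR₁d hCAR₁o hCAR₂ i j h, mul_assoc, uu_comm_a a hCAR₁d hCAR₁o hCAR₂ i j h,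
      mul_assoc]
  have h2 : star (a i) * a i * (star (a j) * a j) = star (a j) * a j * (star (a i) * a i) := by
    simp only [uu, sub_mul, mul_sub, one_mul, mul_one, smul_mul_assoc, mul_smul_comm] at h1
    have h3 : (2:ℂ) • (star (a i) * a i * (star (a j) * a j)) =
        (2:ℂ) • (star (a j) * a j * (star (a i) * a i)) := by
      have h4 := sub_right_inj.mp h1
      simpa using h4
    exact smul_right_injective A two_ne_zero h3
  simp only [uu, mul_sub, sub_mul, mul_one, one_mul, mul_smul_comm, smul_mul_assoc, h2]
  module

lemma UL_comm_uu (k : σ) (L : List σ) : uu a k * UL a L = UL a L * uu a k := by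
  induction L with
  | nil => simp
  | cons j L ih =>
      rw [UL_cons, ← mul_assoc, uu_comm_uu a hCAR₁d hCAR₁o hCAR₂ k j, mul_assoc, ih, ← mul_assoc]

lemma UL_sq (L : List σ) : UL a L * UL a L = 1 := by
  induction L with
  | nil => simp
  | cons j L ih =>
      rw [UL_cons, mul_assoc, ← mul_assoc (UL a L), ← UL_comm_uu a hCAR₁d hCAR₁o hCAR₂,
        ← mul_assoc, ← mul_assoc, uu_sq a hCAR₁d hCAR₁o hCAR₂ j, one_mul, ih]

lemma UL_sa (L : List σ) : star (UL a L) = UL a L := by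
  induction L with
  | nil => simp
  | cons j L ih =>
      rw [UL_cons, star_mul, ih, uu_sa, UL_comm_uu a hCAR₁d hCAR₁o hCAR₂]

lemma UL_comm_a (L : List σ) (j : σ) (h : j ∉ L) : UL a L * a j = a j * UL a L := by
  induction L with
  | nil => simp
  | cons k L ih =>
      have hjk : j ≠ k := fun e => h (e ▸ List.mem_cons_self (a := k) (l := L))
      rw [UL_cons, mul_assoc, ih (fun m => h (List.mem_cons_of_mem k m)), ← mul_assoc,
        uu_comm_a a hCAR₁d hCAR₁o hCAR₂ k j hjk, mul_assoc]

lemma UL_comm_as (L : List σ) (j : σ) (h : j ∉ L) :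
    UL a L * star (a j) = star (a j) * UL a L := by
  induction L with
  | nil => simp
  | cons k L ih =>
      have hjk : j ≠ k := fun e => h (e ▸ List.mem_cons_self (a := k) (l := L))
      rw [UL_cons, mul_assoc, ih (fun m => h (List.mem_cons_of_mem k m)), ← mul_assoc,
        uu_comm_as a hCAR₁d hCAR₁o hCAR₂ k j hjk, mul_assoc]

lemma UL_flip_a (L : List σ) (hnd : L.Nodup) (j : σ) (h : j ∈ L) :
    UL a L * a j = -(a j * UL a L) := by
  induction L with
  | nil => simp at h
  | cons k L ih =>
      rcases List.mem_cons.mp h with rfl | hjL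
      · have hnL : j ∉ L := (List.nodup_cons.mp hnd).1
        rw [UL_cons, mul_assoc, UL_comm_a a hCAR₁d hCAR₁o hCAR₂ L j hnL, ← mul_assoc,
          uu_a_self a hCAR₁d hCAR₁o hCAR₂ j, ← mul_assoc, a_self_uu a hCAR₁d hCAR₁o hCAR₂ j]
        simp
      · have hjk : j ≠ k := by
          rintro rfl; exact (List.nodup_cons.mp hnd).1 hjL
        rw [UL_cons, mul_assoc, ih (List.nodup_cons.mp hnd).2 hjL, mul_neg, ← mul_assoc,
          uu_comm_a a hCAR₁d hCAR₁o hCAR₂ k j hjk, mul_assoc]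

lemma UL_flip_as (L : List σ) (hnd : L.Nodup) (j : σ) (h : j ∈ L) :
    UL a L * star (a j) = -(star (a j) * UL a L) := by
  induction L with
  | nil => simp at h
  | cons k L ih =>
      rcases List.mem_cons.mp h with rfl | hjL
      · have hnL : j ∉ L := (List.nodup_cons.mp hnd).1
        rw [UL_cons, mul_assoc, UL_comm_as a hCAR₁d hCAR₁o hCAR₂ L j hnL, ← mul_assoc,
          uu_as_self a hCAR₁d hCAR₁o hCAR₂ j, ← mul_assoc, as_self_uu a hCAR₁d hCAR₁o hCAR₂ j]
        simp
      · have hjk : j ≠ k := by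
          rintro rfl; exact (List.nodup_cons.mp hnd).1 hjL
        rw [UL_cons, mul_assoc, ih (List.nodup_cons.mp hnd).2 hjL, mul_neg, ← mul_assoc,
          uu_comm_as a hCAR₁d hCAR₁o hCAR₂ k j hjk, mul_assoc]

lemma vv_sq (i : σ) : vv a i * vv a i = 1 := by
  simp only [vv, mul_add, add_mul, sq0 a hCAR₁d hCAR₁o hCAR₂, star_sq0 a hCAR₁d hCAR₁o hCAR₂,
    a_star_self a hCAR₁d hCAR₁o hCAR₂]
  abel

lemma vv_anticomm_a (i j : σ) (h : i ≠ j) : vv a i * a j = -(a j * vv a i) := by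
  simp only [vv, add_mul, mul_add, anticomm a hCAR₁d hCAR₁o hCAR₂ i j h,
    anticomm_star_left a hCAR₁d hCAR₁o hCAR₂ i j h]
  abel

lemma vv_anticomm_as (i j : σ) (h : i ≠ j) :
    vv a i * star (a j) = -(star (a j) * vv a i) := by
  simp only [vv, add_mul, mul_add, anticomm_star_right a hCAR₁d hCAR₁o hCAR₂ i j h,
    anticomm_star_star a hCAR₁d hCAR₁o hCAR₂ i j h]
  abel

lemma vv_comm_uu (i j : σ) (h : i ≠ j) : vv a i * uu a j = uu a j * vv a i := by
  simp only [vv, add_mul, mul_add, ← uu_comm_a a hCAR₁d hCAR₁o hCAR₂ j i h,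
    ← uu_comm_as a hCAR₁d hCAR₁o hCAR₂ j i h]

lemma vv_comm_UL (k : σ) (L : List σ) (h : k ∉ L) : vv a k * UL a L = UL a L * vv a k := by
  induction L with
  | nil => simp
  | cons j L ih =>
      have hkj : k ≠ j := fun e => h (e ▸ List.mem_cons_self (a := j) (l := L))
      rw [UL_cons, ← mul_assoc, vv_comm_uu a hCAR₁d hCAR₁o hCAR₂ k j hkj, mul_assoc,
        ih (fun m => h (List.mem_cons_of_mem j m)), ← mul_assoc]

lemma v_a_v (i : σ) : vv a i * a i * vv a i = star (a i) := by
  have h1 : vv a i * a i = star (a i) * a i := by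
    simp [vv, add_mul, sq0 a hCAR₁d hCAR₁o hCAR₂ i]
  rw [h1, vv, mul_add, mul_assoc, sq0 a hCAR₁d hCAR₁o hCAR₂ i, mul_zero, zero_add,
    as_a_as a hCAR₁d hCAR₁o hCAR₂ i]

lemma v_as_v (i : σ) : vv a i * star (a i) * vv a i = a i := by
  have := congrArg star (v_a_v a hCAR₁d hCAR₁o hCAR₂ i)
  rw [star_mul, star_mul, vv_sa, star_star] at this
  rw [← mul_assoc] at this
  simpa [mul_assoc] using this

end UV

noncomputable def wL (k : σ) (L : List σ) : A := vv a k * UL a L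

section W

variable {k : σ} {L : List σ}
include hCAR₁d hCAR₁o hCAR₂

lemma wL_sa (h : k ∉ L) : star (wL a k L) = wL a k L := by
  rw [wL, star_mul, UL_sa a hCAR₁d hCAR₁o hCAR₂, vv_sa, ← vv_comm_UL a hCAR₁d hCAR₁o hCAR₂ k L h]

lemma wL_sq (h : k ∉ L) : wL a k L * wL a k L = 1 := by
  rw [wL, mul_assoc, ← mul_assoc (UL a L), ← vv_comm_UL a hCAR₁d hCAR₁o hCAR₂ k L h, ← mul_assoc,
    ← mul_assoc, vv_sq a hCAR₁d hCAR₁o hCAR₂ k, one_mul, UL_sq a hCAR₁d hCAR₁o hCAR₂]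

lemma wL_comm_a (hnd : L.Nodup) (j : σ) (hj : j ∈ L) (hjk : j ≠ k) :
    wL a k L * a j = a j * wL a k L := by
  rw [wL, mul_assoc, UL_flip_a a hCAR₁d hCAR₁o hCAR₂ L hnd j hj, mul_neg, ← mul_assoc,
    vv_anticomm_a a hCAR₁d hCAR₁o hCAR₂ k j (Ne.symm hjk), neg_mul, neg_neg, mul_assoc]

lemma wL_comm_as (hnd : L.Nodup) (j : σ) (hj : j ∈ L) (hjk : j ≠ k) :
    wL a k L * star (a j) = star (a j) * wL a k L := by
  rw [wL, mul_assoc, UL_flip_as a hCAR₁d hCAR₁o hCAR₂ L hnd j hj, mul_neg, ← mul_assoc,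
    vv_anticomm_as a hCAR₁d hCAR₁o hCAR₂ k j (Ne.symm hjk), neg_mul, neg_neg, mul_assoc]

lemma wL_a (h : k ∉ L) : wL a k L * a k * wL a k L = star (a k) := by
  have h1 : UL a L * a k = a k * UL a L := UL_comm_a a hCAR₁d hCAR₁o hCAR₂ L k h
  have h2 : UL a L * vv a k = vv a k * UL a L := (vv_comm_UL a hCAR₁d hCAR₁o hCAR₂ k L h).symm
  have h3 : UL a L * UL a L = 1 := UL_sq a hCAR₁d hCAR₁o hCAR₂ L
  calc vv a k * UL a L * a k * (vv a k * UL a L)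
      = vv a k * (UL a L * a k) * (vv a k * UL a L) := by rw [mul_assoc (vv a k)]
    _ = vv a k * (a k * UL a L) * (vv a k * UL a L) := by rw [h1]
    _ = vv a k * a k * (UL a L * vv a k * UL a L) := by simp only [mul_assoc]
    _ = vv a k * a k * (vv a k * (UL a L * UL a L)) := by rw [h2]; simp only [mul_assoc]
    _ = vv a k * a k * vv a k := by rw [h3, mul_one]
    _ = star (a k) := v_a_v a hCAR₁d hCAR₁o hCAR₂ k

lemma wL_as (h : k ∉ L) : wL a k L * star (a k) * wL a k L = a k := by
  have := congrArg star (wL_a a hCAR₁d hCAR₁o hCAR₂ h)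
  rw [star_mul, star_mul, wL_sa a hCAR₁d hCAR₁o hCAR₂ h, star_star] at this
  calc wL a k L * star (a k) * wL a k L
      = wL a k L * (star (a k) * wL a k L) := by rw [mul_assoc]
    _ = a k := this

end W


noncomputable def adj (G : Finset σ) : StarSubalgebra ℂ A :=
  StarAlgebra.adjoin ℂ (a '' (G : Set σ))

lemma adj_mono {G H : Finset σ} (h : G ⊆ H) : adj a G ≤ adj a H :=
  StarAlgebra.adjoin_le ((Set.image_mono (f := a) (by exact_mod_cast h)).trans
    (StarAlgebra.subset_adjoin ℂ _))

lemma gen_mem_adj {G : Finset σ} {j : σ} (hj : j ∈ G) : a j ∈ adj a G :=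
  StarAlgebra.subset_adjoin ℂ _ ⟨j, by simpa using hj⟩

lemma commute_adjoin {g : A} (hg : star g = g) {G : Finset σ}
    (hc : ∀ j ∈ G, g * a j = a j * g) :
    ∀ x ∈ adj a G, g * x = x * g := by
  intro x hx
  induction hx using StarAlgebra.adjoin_induction with
  | mem y hy =>
      obtain ⟨j, hj, rfl⟩ := hy
      exact hc j (by simpa using hj)
  | algebraMap r => exact (Algebra.commutes r g).symm
  | add x y hx hy ihx ihy => rw [mul_add, add_mul, ihx, ihy]
  | mul x y hx hy ihx ihy => rw [← mul_assoc, ihx, mul_assoc, ihy, mul_assoc]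
  | star x hx ihx =>
      have := congrArg star ihx
      rw [star_mul, star_mul, hg] at this
      exact this.symm

section Adjoin
include hCAR₁d hCAR₁o hCAR₂

lemma parity_conj_gen {L : List σ} (hnd : L.Nodup) {j : σ} (hj : j ∈ L) :
    UL a L * a j * UL a L = -(a j) := by
  rw [UL_flip_a a hCAR₁d hCAR₁o hCAR₂ L hnd j hj, neg_mul, mul_assoc, UL_sq a hCAR₁d hCAR₁o hCAR₂, mul_one]

lemma parity_conj_mem {L : List σ} (hnd : L.Nodup) {G : Finset σ} (hG : ∀ j ∈ G, j ∈ L) :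
    ∀ x ∈ adj a G, UL a L * x * UL a L ∈ adj a G := by
  intro x hx
  induction hx using StarAlgebra.adjoin_induction with
  | mem y hy =>
      obtain ⟨j, hj, rfl⟩ := hy
      rw [parity_conj_gen a hCAR₁d hCAR₁o hCAR₂ hnd (hG j (by simpa using hj))]
      exact neg_mem (gen_mem_adj a (by simpa using hj))
  | algebraMap r =>
      have : UL a L * algebraMap ℂ A r * UL a L = algebraMap ℂ A r * (UL a L * UL a L) := by
        rw [← Algebra.commutes r (UL a L), mul_assoc]
      rw [this, UL_sq a hCAR₁d hCAR₁o hCAR₂, mul_one]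
      exact algebraMap_mem _ r
  | add x y hx hy ihx ihy =>
      have : UL a L * (x + y) * UL a L = UL a L * x * UL a L + UL a L * y * UL a L := by
        rw [mul_add, add_mul]
      rw [this]; exact add_mem ihx ihy
  | mul x y hx hy ihx ihy =>
      have : UL a L * (x * y) * UL a L =
          (UL a L * x * UL a L) * (UL a L * y * UL a L) := by
        simp only [mul_assoc]
        rw [← mul_assoc (UL a L) (UL a L), UL_sq a hCAR₁d hCAR₁o hCAR₂, one_mul]
      rw [this]; exact mul_mem ihx ihy
  | star x hx ihx =>
      have : UL a L * star x * UL a L = star (UL a L * x * UL a L) := by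
        rw [star_mul, star_mul, UL_sa a hCAR₁d hCAR₁o hCAR₂]
        simp only [mul_assoc]
      rw [this]; exact star_mem ihx

lemma swap_lemma {L : List σ} (hnd : L.Nodup) {k : σ} (hk : k ∉ L) {G : Finset σ}
    (hG : ∀ j ∈ G, j ∈ L) :
    ∀ x ∈ adj a G,
      (a k * x = (UL a L * x * UL a L) * a k) ∧
      (star (a k) * x = (UL a L * x * UL a L) * star (a k)) ∧
      (x * a k = a k * (UL a L * x * UL a L)) ∧
      (x * star (a k) = star (a k) * (UL a L * x * UL a L)) := by
  intro x hx
  have hUsq : UL a L * UL a L = 1 := UL_sq a hCAR₁d hCAR₁o hCAR₂ L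
  have hUsa : star (UL a L) = UL a L := UL_sa a hCAR₁d hCAR₁o hCAR₂ L
  induction hx using StarAlgebra.adjoin_induction with
  | mem y hy =>
      obtain ⟨j, hj, rfl⟩ := hy
      have hjG : j ∈ G := by simpa using hj
      have hjk : j ≠ k := fun e => hk (e ▸ hG j hjG)
      have hc : UL a L * a j * UL a L = -(a j) :=
        parity_conj_gen a hCAR₁d hCAR₁o hCAR₂ hnd (hG j hjG)
      rw [hc]
      refine ⟨?_, ?_, ?_, ?_⟩
      · rw [anticomm a hCAR₁d hCAR₁o hCAR₂ k j (Ne.symm hjk), neg_mul]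
      · rw [anticomm_star_left a hCAR₁d hCAR₁o hCAR₂ k j (Ne.symm hjk), neg_mul]
      · rw [anticomm a hCAR₁d hCAR₁o hCAR₂ j k hjk, mul_neg]
      · rw [anticomm_star_right a hCAR₁d hCAR₁o hCAR₂ j k hjk, mul_neg]
  | algebraMap r =>
      have hc : UL a L * algebraMap ℂ A r * UL a L = algebraMap ℂ A r := by
        rw [← Algebra.commutes r (UL a L), mul_assoc, hUsq, mul_one]
      rw [hc]
      exact ⟨(Algebra.commutes r _).symm, (Algebra.commutes r _).symm,
        Algebra.commutes r _, Algebra.commutes r _⟩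
  | add x y hx hy ihx ihy =>
      obtain ⟨h1, h2, h3, h4⟩ := ihx
      obtain ⟨g1, g2, g3, g4⟩ := ihy
      have hc : UL a L * (x + y) * UL a L = UL a L * x * UL a L + UL a L * y * UL a L := by
        rw [mul_add, add_mul]
      rw [hc]
      exact ⟨by rw [mul_add, h1, g1, add_mul], by rw [mul_add, h2, g2, add_mul],
        by rw [add_mul, h3, g3, mul_add], by rw [add_mul, h4, g4, mul_add]⟩
  | mul x y hx hy ihx ihy =>
      obtain ⟨h1, h2, h3, h4⟩ := ihx
      obtain ⟨g1, g2, g3, g4⟩ := ihy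
      have hc : UL a L * (x * y) * UL a L =
          (UL a L * x * UL a L) * (UL a L * y * UL a L) := by
        simp only [mul_assoc]
        rw [← mul_assoc (UL a L) (UL a L), hUsq, one_mul]
      rw [hc]
      refine ⟨?_, ?_, ?_, ?_⟩
      · rw [← mul_assoc, h1, mul_assoc, g1, ← mul_assoc]
      · rw [← mul_assoc, h2, mul_assoc, g2, ← mul_assoc]
      · rw [mul_assoc, g3, ← mul_assoc, h3, mul_assoc]
      · rw [mul_assoc, g4, ← mul_assoc, h4, mul_assoc]
  | star x hx ihx =>
      obtain ⟨h1, h2, h3, h4⟩ := ihx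
      have hc : UL a L * star x * UL a L = star (UL a L * x * UL a L) := by
        rw [star_mul, star_mul, hUsa]
        simp only [mul_assoc]
      rw [hc]
      refine ⟨?_, ?_, ?_, ?_⟩
      · have := congrArg star h4
        rwa [star_mul, star_mul, star_star] at this
      · have := congrArg star h3
        rwa [star_mul, star_mul] at this
      · have := congrArg star h2
        rwa [star_mul, star_mul, star_star] at this
      · have := congrArg star h1
        rwa [star_mul, star_mul] at this

end Adjoin

section Decomp
include hCAR₁d hCAR₁o hCAR₂

lemma mul_decomp (k : σ) (b₀ b₁ b₂ b₃ s₀ s₁ s₂ s₃ c₀ c₁ c₂ c₃ : A)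
    (hb₀ : b₀ * a k = a k * c₀) (hb₀' : b₀ * star (a k) = star (a k) * c₀)
    (hc₀ : c₀ * a k = a k * b₀) (hc₀' : c₀ * star (a k) = star (a k) * b₀)
    (hb₁ : b₁ * a k = a k * c₁) (hb₁' : b₁ * star (a k) = star (a k) * c₁)
    (hc₁ : c₁ * a k = a k * b₁) (hc₁' : c₁ * star (a k) = star (a k) * b₁)
    (hb₂ : b₂ * a k = a k * c₂) (hb₂' : b₂ * star (a k) = star (a k) * c₂)
    (hc₂ : c₂ * a k = a k * b₂) (hc₂' : c₂ * star (a k) = star (a k) * b₂)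
    (hb₃ : b₃ * a k = a k * c₃) (hb₃' : b₃ * star (a k) = star (a k) * c₃)
    (hc₃ : c₃ * a k = a k * b₃) (hc₃' : c₃ * star (a k) = star (a k) * b₃) :
    (b₀ + a k * b₁ + star (a k) * b₂ + star (a k) * (a k * b₃)) *
      (s₀ + a k * s₁ + star (a k) * s₂ + star (a k) * (a k * s₃)) =
    (b₀ * s₀ + c₁ * s₂) + a k * (c₀ * s₁ + b₁ * s₀ + b₁ * s₃) +
      star (a k) * (c₀ * s₂ + b₂ * s₀ + c₃ * s₂) +
      star (a k) * (a k * (b₀ * s₃ - c₁ * s₂ + c₂ * s₁ + b₃ * s₀ + b₃ * s₃)) := by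
  have mk : ∀ {p q w : A}, p * w = w * q → ∀ z : A, p * (w * z) = w * (q * z) := by
    intro p q w h z
    rw [← mul_assoc, h, mul_assoc]
  have Hb₀a := mk hb₀
  have Hb₀s := mk hb₀'
  have Hc₀a := mk hc₀
  have Hc₀s := mk hc₀'
  have Hb₁a := mk hb₁
  have Hb₁s := mk hb₁'
  have Hc₁a := mk hc₁
  have Hc₁s := mk hc₁'
  have Hb₂a := mk hb₂
  have Hb₂s := mk hb₂'
  have Hc₂a := mk hc₂
  have Hc₂s := mk hc₂'
  have Hb₃a := mk hb₃
  have Hb₃s := mk hb₃'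
  have Hc₃a := mk hc₃
  have Hc₃s := mk hc₃'
  have e0 : a k * a k = 0 := sq0 a hCAR₁d hCAR₁o hCAR₂ k
  have e1 : star (a k) * star (a k) = 0 := star_sq0 a hCAR₁d hCAR₁o hCAR₂ k
  have e2 : a k * star (a k) = 1 - star (a k) * a k := a_star_self a hCAR₁d hCAR₁o hCAR₂ k
  have e3 : a k * star (a k) * a k = a k := asa_a a hCAR₁d hCAR₁o hCAR₂ k
  have e4 : star (a k) * a k * star (a k) = star (a k) := as_a_as a hCAR₁d hCAR₁o hCAR₂ k
  have z0 : ∀ z : A, a k * (a k * z) = 0 := by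
    intro z; rw [← mul_assoc, e0, zero_mul]
  have z1 : ∀ z : A, star (a k) * (star (a k) * z) = 0 := by
    intro z; rw [← mul_assoc, e1, zero_mul]
  have z2 : ∀ z : A, a k * (star (a k) * z) = z - star (a k) * (a k * z) := by
    intro z; rw [← mul_assoc, e2, sub_mul, one_mul, ← mul_assoc]
  have z3 : ∀ z : A, a k * (star (a k) * (a k * z)) = a k * z := by
    intro z; rw [← mul_assoc, ← mul_assoc, e3]
  have z4 : ∀ z : A, star (a k) * (a k * (star (a k) * z)) = star (a k) * z := by
    intro z; rw [← mul_assoc, ← mul_assoc, e4]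
  simp only [mul_add, add_mul, mul_assoc]
  simp only [Hb₀a, Hb₀s, Hc₀a, Hc₀s, Hb₁a, Hb₁s, Hc₁a, Hc₁s, Hb₂a, Hb₂s, Hc₂a, Hc₂s,
    Hb₃a, Hb₃s, Hc₃a, Hc₃s]
  simp only [z0, z1, z2, z3, z4, mul_zero, zero_mul, add_zero, zero_add, mul_sub, sub_mul,
    mul_add]
  abel

end Decomp

section DecompMain
include hCAR₁d hCAR₁o hCAR₂

lemma cP_cP {L : List σ} (x : A) :
    UL a L * (UL a L * x * UL a L) * UL a L = x := by
  have h := UL_sq a hCAR₁d hCAR₁o hCAR₂ L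
  calc UL a L * (UL a L * x * UL a L) * UL a L
      = (UL a L * UL a L) * x * (UL a L * UL a L) := by simp only [mul_assoc]
    _ = x := by rw [h, one_mul, mul_one]

lemma decomp {L : List σ} (hnd : L.Nodup) {k : σ} (hk : k ∉ L) {G : Finset σ}
    (hG : ∀ j ∈ G, j ≠ k → j ∈ L) :
    ∀ x ∈ adj a G, ∃ b₀ b₁ b₂ b₃ : A, b₀ ∈ adj a (G.erase k) ∧ b₁ ∈ adj a (G.erase k) ∧
      b₂ ∈ adj a (G.erase k) ∧ b₃ ∈ adj a (G.erase k) ∧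
      x = b₀ + a k * b₁ + star (a k) * b₂ + star (a k) * (a k * b₃) := by
  have hE : ∀ j ∈ G.erase k, j ∈ L := fun j hj =>
    hG j (Finset.mem_of_mem_erase hj) (Finset.ne_of_mem_erase hj)
  have swap := swap_lemma a hCAR₁d hCAR₁o hCAR₂ hnd hk hE
  have cmem := parity_conj_mem a hCAR₁d hCAR₁o hCAR₂ hnd hE
  have ccp : ∀ x : A, UL a L * (UL a L * x * UL a L) * UL a L = x := cP_cP a hCAR₁d hCAR₁o hCAR₂
  intro x hx
  induction hx using StarAlgebra.adjoin_induction with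
  | mem y hy =>
      obtain ⟨j, hj, rfl⟩ := hy
      have hjG : j ∈ G := by simpa using hj
      by_cases hjk : j = k
      · subst hjk
        exact ⟨0, 1, 0, 0, zero_mem _, one_mem _, zero_mem _, zero_mem _, by simp⟩
      · exact ⟨a j, 0, 0, 0, gen_mem_adj a (Finset.mem_erase.mpr ⟨hjk, hjG⟩), zero_mem _,
          zero_mem _, zero_mem _, by simp⟩
  | algebraMap r =>
      exact ⟨algebraMap ℂ A r, 0, 0, 0, algebraMap_mem _ r, zero_mem _, zero_mem _, zero_mem _,
        by simp⟩
  | add x y hx hy ihx ihy =>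
      obtain ⟨b₀, b₁, b₂, b₃, m0, m1, m2, m3, he⟩ := ihx
      obtain ⟨s₀, s₁, s₂, s₃, n0, n1, n2, n3, hf⟩ := ihy
      refine ⟨b₀ + s₀, b₁ + s₁, b₂ + s₂, b₃ + s₃, add_mem m0 n0, add_mem m1 n1, add_mem m2 n2,
        add_mem m3 n3, ?_⟩
      rw [he, hf]
      simp only [mul_add, add_mul]
      abel
  | mul x y hx hy ihx ihy =>
      obtain ⟨b₀, b₁, b₂, b₃, m0, m1, m2, m3, he⟩ := ihx
      obtain ⟨s₀, s₁, s₂, s₃, n0, n1, n2, n3, hf⟩ := ihy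
      set c₀ := UL a L * b₀ * UL a L with hc₀def
      set c₁ := UL a L * b₁ * UL a L with hc₁def
      set c₂ := UL a L * b₂ * UL a L with hc₂def
      set c₃ := UL a L * b₃ * UL a L with hc₃def
      have hcm0 : c₀ ∈ adj a (G.erase k) := cmem _ m0
      have hcm1 : c₁ ∈ adj a (G.erase k) := cmem _ m1
      have hcm2 : c₂ ∈ adj a (G.erase k) := cmem _ m2
      have hcm3 : c₃ ∈ adj a (G.erase k) := cmem _ m3
      refine ⟨b₀ * s₀ + c₁ * s₂, c₀ * s₁ + b₁ * s₀ + b₁ * s₃, c₀ * s₂ + b₂ * s₀ + c₃ * s₂,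
        b₀ * s₃ - c₁ * s₂ + c₂ * s₁ + b₃ * s₀ + b₃ * s₃, ?_, ?_, ?_, ?_, ?_⟩
      · exact add_mem (mul_mem m0 n0) (mul_mem hcm1 n2)
      · exact add_mem (add_mem (mul_mem hcm0 n1) (mul_mem m1 n0)) (mul_mem m1 n3)
      · exact add_mem (add_mem (mul_mem hcm0 n2) (mul_mem m2 n0)) (mul_mem hcm3 n2)
      · exact add_mem (add_mem (add_mem (sub_mem (mul_mem m0 n3) (mul_mem hcm1 n2))
          (mul_mem hcm2 n1)) (mul_mem m3 n0)) (mul_mem m3 n3)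
      · rw [he, hf]
        refine mul_decomp a hCAR₁d hCAR₁o hCAR₂ k b₀ b₁ b₂ b₃ s₀ s₁ s₂ s₃ c₀ c₁ c₂ c₃
          (swap b₀ m0).2.2.1 (swap b₀ m0).2.2.2 ?_ ?_
          (swap b₁ m1).2.2.1 (swap b₁ m1).2.2.2 ?_ ?_
          (swap b₂ m2).2.2.1 (swap b₂ m2).2.2.2 ?_ ?_
          (swap b₃ m3).2.2.1 (swap b₃ m3).2.2.2 ?_ ?_
        · have := (swap c₀ hcm0).2.2.1; rwa [hc₀def, ccp] at this
        · have := (swap c₀ hcm0).2.2.2; rwa [hc₀def, ccp] at this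
        · have := (swap c₁ hcm1).2.2.1; rwa [hc₁def, ccp] at this
        · have := (swap c₁ hcm1).2.2.2; rwa [hc₁def, ccp] at this
        · have := (swap c₂ hcm2).2.2.1; rwa [hc₂def, ccp] at this
        · have := (swap c₂ hcm2).2.2.2; rwa [hc₂def, ccp] at this
        · have := (swap c₃ hcm3).2.2.1; rwa [hc₃def, ccp] at this
        · have := (swap c₃ hcm3).2.2.2; rwa [hc₃def, ccp] at this
  | star x hx ihx =>
      obtain ⟨b₀, b₁, b₂, b₃, m0, m1, m2, m3, he⟩ := ihx
      refine ⟨star b₀, UL a L * star b₂ * UL a L, UL a L * star b₁ * UL a L, star b₃,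
        star_mem m0, cmem _ (star_mem m2), cmem _ (star_mem m1), star_mem m3, ?_⟩
      rw [he]
      have h2 : star b₁ * star (a k) = star (a k) * (UL a L * star b₁ * UL a L) :=
        (swap (star b₁) (star_mem m1)).2.2.2
      have h3 : star b₂ * a k = a k * (UL a L * star b₂ * UL a L) :=
        (swap (star b₂) (star_mem m2)).2.2.1
      have h4 : star b₃ * star (a k) = star (a k) * (UL a L * star b₃ * UL a L) :=
        (swap (star b₃) (star_mem m3)).2.2.2
      have h5 : (UL a L * star b₃ * UL a L) * a k =
          a k * (UL a L * (UL a L * star b₃ * UL a L) * UL a L) :=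
        (swap _ (cmem _ (star_mem m3))).2.2.1
      rw [ccp] at h5
      simp only [star_add, star_mul, star_star]
      rw [h2, h3]
      rw [show star b₃ * star (a k) * a k = star (a k) * (a k * star b₃) by
        rw [h4, mul_assoc, h5]]
      abel

end DecompMain

noncomputable def cavg (g x : A) : A := (2:ℂ)⁻¹ • (x + g * x * g)

noncomputable def tl (F : Finset σ) (k : σ) : List σ := (F.erase k).sort (· ≤ ·)

noncomputable def QQ (k : σ) (F : Finset σ) (x : A) : A :=
  cavg (wL a k (tl F k)) (cavg (uu a k) x)

lemma tl_not_mem (F : Finset σ) (k : σ) : k ∉ tl F k := by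
  simp [tl, Finset.mem_sort]

lemma tl_nodup (F : Finset σ) (k : σ) : (tl F k).Nodup := Finset.sort_nodup _ _

lemma tl_mem {F : Finset σ} {k j : σ} (hj : j ∈ F) (hjk : j ≠ k) : j ∈ tl F k := by
  simp [tl, Finset.mem_sort, Finset.mem_erase, hjk, hj]

omit [LinearOrder σ] in
lemma cavg_id {g x : A} (hsq : g * g = 1) (hc : g * x = x * g) : cavg g x = x := by
  rw [cavg, mul_assoc, ← hc, ← mul_assoc, hsq, one_mul, ← two_smul ℂ x, smul_smul]
  norm_num

omit [LinearOrder σ] in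
lemma cavg_sub (g x y : A) : cavg g (x - y) = cavg g x - cavg g y := by
  simp only [cavg, mul_sub, sub_mul, smul_sub]
  rw [← smul_sub]
  congr 1
  abel

omit [LinearOrder σ] in
lemma cavg_norm {g : A} (hg : ‖g‖ ≤ 1) (x : A) : ‖cavg g x‖ ≤ ‖x‖ := by
  have h1 : ‖g * x * g‖ ≤ ‖x‖ := by
    calc ‖g * x * g‖ ≤ ‖g * x‖ * ‖g‖ := norm_mul_le _ _
      _ ≤ ‖g‖ * ‖x‖ * ‖g‖ := by
          gcongr
          exact norm_mul_le _ _
      _ ≤ 1 * ‖x‖ * 1 := by gcongr <;> positivity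
      _ = ‖x‖ := by ring
  calc ‖cavg g x‖ = ‖(2:ℂ)⁻¹‖ * ‖x + g * x * g‖ := norm_smul _ _
    _ ≤ ‖(2:ℂ)⁻¹‖ * (‖x‖ + ‖x‖) := by
        gcongr
        exact (norm_add_le _ _).trans (by gcongr)
    _ = ‖x‖ := by
        simp [norm_inv]
        ring

omit [LinearOrder σ] in
lemma conj_term {g b : A} (hc : g * b = b * g) (p : A) : g * (p * b) * g = (g * p * g) * b := by
  calc g * (p * b) * g = g * p * (b * g) := by simp only [mul_assoc]
    _ = g * p * (g * b) := by rw [hc]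
    _ = (g * p * g) * b := by simp only [mul_assoc]

section QSec
include hCAR₁d hCAR₁o hCAR₂

lemma sa_unit_norm {g : A} (hsa : star g = g) (hsq : g * g = 1) : ‖g‖ ≤ 1 := by
  have h : ‖g‖ * ‖g‖ = ‖(1:A)‖ := by
    have := CStarRing.norm_star_mul_self (x := g)
    rw [hsa, hsq] at this
    linarith [this]
  have h1 : ‖(1:A)‖ * ‖(1:A)‖ = ‖(1:A)‖ := by
    have := CStarRing.norm_star_mul_self (x := (1:A))
    rw [star_one, one_mul] at this
    linarith [this]
  have h2 : ‖(1:A)‖ ≤ 1 := by nlinarith [norm_nonneg (1:A), sq_nonneg (‖(1:A)‖ - 1)]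
  nlinarith [norm_nonneg g, sq_nonneg (‖g‖ - 1)]

lemma uu_comm_adj {k : σ} {G : Finset σ} (hkG : k ∉ G) :
    ∀ x ∈ adj a G, uu a k * x = x * uu a k := by
  refine commute_adjoin a (uu_sa a k) (fun j hj => ?_)
  exact uu_comm_a a hCAR₁d hCAR₁o hCAR₂ k j (fun e => hkG (e ▸ hj))

lemma wL_comm_adj {k : σ} {F G : Finset σ} (hGF : G ⊆ F) (hkG : k ∉ G) :
    ∀ x ∈ adj a G, wL a k (tl F k) * x = x * wL a k (tl F k) := by
  refine commute_adjoin a (wL_sa a hCAR₁d hCAR₁o hCAR₂ (tl_not_mem F k)) (fun j hj => ?_)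
  have hjk : j ≠ k := fun e => hkG (e ▸ hj)
  exact wL_comm_a a hCAR₁d hCAR₁o hCAR₂ (tl_nodup F k) j (tl_mem (hGF hj) hjk) hjk

lemma Q_id {k : σ} {F G : Finset σ} (hGF : G ⊆ F) (hkG : k ∉ G) {x : A}
    (hx : x ∈ adj a G) : QQ a k F x = x := by
  rw [QQ, cavg_id (uu_sq a hCAR₁d hCAR₁o hCAR₂ k) (uu_comm_adj a hCAR₁d hCAR₁o hCAR₂ hkG x hx),
    cavg_id (wL_sq a hCAR₁d hCAR₁o hCAR₂ (tl_not_mem F k)) (wL_comm_adj a hCAR₁d hCAR₁o hCAR₂ hGF hkG x hx)]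

lemma Q_eval {k : σ} {F G : Finset σ} (hGF : G ⊆ F) {x b₀ b₁ b₂ b₃ : A}
    (m0 : b₀ ∈ adj a (G.erase k)) (m1 : b₁ ∈ adj a (G.erase k))
    (m2 : b₂ ∈ adj a (G.erase k)) (m3 : b₃ ∈ adj a (G.erase k))
    (heq : x = b₀ + a k * b₁ + star (a k) * b₂ + star (a k) * (a k * b₃)) :
    QQ a k F x = b₀ + (2:ℂ)⁻¹ • b₃ := by
  have hkE : k ∉ G.erase k := Finset.notMem_erase k G
  have hEF : G.erase k ⊆ F := (Finset.erase_subset k G).trans hGF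
  have hu : ∀ b ∈ adj a (G.erase k), uu a k * b = b * uu a k :=
    uu_comm_adj a hCAR₁d hCAR₁o hCAR₂ hkE
  have hw : ∀ b ∈ adj a (G.erase k), wL a k (tl F k) * b = b * wL a k (tl F k) :=
    wL_comm_adj a hCAR₁d hCAR₁o hCAR₂ hEF hkE
  have husq : uu a k * uu a k = 1 := uu_sq a hCAR₁d hCAR₁o hCAR₂ k
  have hwsq : wL a k (tl F k) * wL a k (tl F k) = 1 :=
    wL_sq a hCAR₁d hCAR₁o hCAR₂ (tl_not_mem F k)
  -- step 1
  have s1 : cavg (uu a k) x = b₀ + star (a k) * (a k * b₃) := by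
    have c0 : uu a k * b₀ * uu a k = b₀ := by
      rw [hu b₀ m0, mul_assoc, husq, mul_one]
    have c1 : uu a k * (a k * b₁) * uu a k = -(a k * b₁) := by
      rw [conj_term (hu b₁ m1) (a k), uu_a_self a hCAR₁d hCAR₁o hCAR₂ k,
        a_self_uu a hCAR₁d hCAR₁o hCAR₂ k, neg_mul]
    have c2 : uu a k * (star (a k) * b₂) * uu a k = -(star (a k) * b₂) := by
      rw [conj_term (hu b₂ m2) (star (a k)), uu_as_self a hCAR₁d hCAR₁o hCAR₂ k, neg_mul, neg_mul,
        as_self_uu a hCAR₁d hCAR₁o hCAR₂ k]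
    have c3 : uu a k * (star (a k) * (a k * b₃)) * uu a k = star (a k) * (a k * b₃) := by
      rw [show star (a k) * (a k * b₃) = (star (a k) * a k) * b₃ from by rw [mul_assoc]]
      rw [conj_term (hu b₃ m3) (star (a k) * a k)]
      have hn1 : uu a k * (star (a k) * a k) = -(star (a k) * a k) := by
        rw [← mul_assoc, uu_as_self a hCAR₁d hCAR₁o hCAR₂ k, neg_mul]
      have hn2 : (star (a k) * a k) * uu a k = -(star (a k) * a k) := by
        rw [mul_assoc, a_self_uu a hCAR₁d hCAR₁o hCAR₂ k, mul_neg]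
      rw [hn1, neg_mul, hn2, neg_neg]
    rw [cavg, heq]
    simp only [mul_add, add_mul]
    rw [show uu a k * b₀ * uu a k + uu a k * (a k * b₁) * uu a k +
        uu a k * (star (a k) * b₂) * uu a k + uu a k * (star (a k) * (a k * b₃)) * uu a k =
        b₀ + -(a k * b₁) + -(star (a k) * b₂) + star (a k) * (a k * b₃) from by
      rw [c0, c1, c2, c3]]
    rw [show b₀ + a k * b₁ + star (a k) * b₂ + star (a k) * (a k * b₃) +
        (b₀ + -(a k * b₁) + -(star (a k) * b₂) + star (a k) * (a k * b₃)) =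
        (2:ℂ) • (b₀ + star (a k) * (a k * b₃)) from by
      rw [two_smul]; abel]
    rw [smul_smul]
    norm_num
  -- step 2
  rw [QQ, s1, cavg]
  have d0 : wL a k (tl F k) * b₀ * wL a k (tl F k) = b₀ := by
    rw [hw b₀ m0, mul_assoc, hwsq, mul_one]
  have d3 : wL a k (tl F k) * (star (a k) * (a k * b₃)) * wL a k (tl F k) =
      b₃ - star (a k) * (a k * b₃) := by
    rw [show star (a k) * (a k * b₃) = (star (a k) * a k) * b₃ from by rw [mul_assoc]]
    rw [conj_term (hw b₃ m3) (star (a k) * a k)]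
    have h2 : wL a k (tl F k) * (star (a k) * a k) * wL a k (tl F k) =
        a k * star (a k) := by
      calc wL a k (tl F k) * (star (a k) * a k) * wL a k (tl F k)
          = (wL a k (tl F k) * star (a k)) * (a k * wL a k (tl F k)) := by
            simp only [mul_assoc]
        _ = (wL a k (tl F k) * star (a k)) *
              ((wL a k (tl F k) * wL a k (tl F k)) * (a k * wL a k (tl F k))) := by
            rw [hwsq, one_mul]
        _ = (wL a k (tl F k) * star (a k) * wL a k (tl F k)) *
              (wL a k (tl F k) * a k * wL a k (tl F k)) := by
            simp only [mul_assoc]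
        _ = a k * star (a k) := by
            rw [wL_as a hCAR₁d hCAR₁o hCAR₂ (tl_not_mem F k), wL_a a hCAR₁d hCAR₁o hCAR₂ (tl_not_mem F k)]
    rw [h2, a_star_self a hCAR₁d hCAR₁o hCAR₂ k, sub_mul, one_mul, mul_assoc]
  rw [mul_add, add_mul, d0, d3]
  rw [show b₀ + star (a k) * (a k * b₃) + (b₀ + (b₃ - star (a k) * (a k * b₃))) =
      (2:ℂ) • b₀ + b₃ from by rw [two_smul]; abel]
  rw [smul_add, smul_smul]
  norm_num

lemma decomp' {k : σ} {G : Finset σ} {x : A} (hx : x ∈ adj a G) :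
    ∃ b₀ b₁ b₂ b₃ : A, b₀ ∈ adj a (G.erase k) ∧ b₁ ∈ adj a (G.erase k) ∧
      b₂ ∈ adj a (G.erase k) ∧ b₃ ∈ adj a (G.erase k) ∧
      x = b₀ + a k * b₁ + star (a k) * b₂ + star (a k) * (a k * b₃) := by
  refine decomp a hCAR₁d hCAR₁o hCAR₂ (L := (G.erase k).sort (· ≤ ·)) (Finset.sort_nodup _ _)
    (by simp [Finset.mem_sort]) (fun j hj hjk => ?_) x hx
  simp [Finset.mem_sort, Finset.mem_erase, hjk, hj]

lemma Q_indep {k : σ} {F F' G : Finset σ} (hGF : G ⊆ F) (hGF' : G ⊆ F') {x : A}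
    (hx : x ∈ adj a G) : QQ a k F x = QQ a k F' x := by
  by_cases hkG : k ∈ G
  · obtain ⟨b₀, b₁, b₂, b₃, m0, m1, m2, m3, heq⟩ := decomp' a hCAR₁d hCAR₁o hCAR₂ (k := k) hx
    rw [Q_eval a hCAR₁d hCAR₁o hCAR₂ hGF m0 m1 m2 m3 heq, Q_eval a hCAR₁d hCAR₁o hCAR₂ hGF' m0 m1 m2 m3 heq]
  · rw [Q_id a hCAR₁d hCAR₁o hCAR₂ hGF hkG hx, Q_id a hCAR₁d hCAR₁o hCAR₂ hGF' hkG hx]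

lemma Q_mem {k : σ} {F G : Finset σ} (hGF : G ⊆ F) {x : A}
    (hx : x ∈ adj a G) : QQ a k F x ∈ adj a (G.erase k) := by
  by_cases hkG : k ∈ G
  · obtain ⟨b₀, b₁, b₂, b₃, m0, m1, m2, m3, heq⟩ := decomp' a hCAR₁d hCAR₁o hCAR₂ (k := k) hx
    rw [Q_eval a hCAR₁d hCAR₁o hCAR₂ hGF m0 m1 m2 m3 heq]
    exact add_mem m0 (SMulMemClass.smul_mem _ m3)
  · rw [Q_id a hCAR₁d hCAR₁o hCAR₂ hGF hkG hx, Finset.erase_eq_of_notMem hkG]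
    exact hx

end QSec

noncomputable def QLf : List σ → Finset σ → A → A
  | [], _, x => x
  | k :: L, F, x => QLf L F (QQ a k F x)

@[simp] lemma QLf_nil (F : Finset σ) (x : A) : QLf a [] F x = x := rfl

lemma QLf_cons (k : σ) (L : List σ) (F : Finset σ) (x : A) :
    QLf a (k :: L) F x = QLf a L F (QQ a k F x) := rfl

section QLSec
include hCAR₁d hCAR₁o hCAR₂

lemma Q_sub (k : σ) (F : Finset σ) (x y : A) :
    QQ a k F (x - y) = QQ a k F x - QQ a k F y := by
  rw [QQ, QQ, QQ, cavg_sub, cavg_sub]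

lemma Q_norm (k : σ) (F : Finset σ) (x : A) : ‖QQ a k F x‖ ≤ ‖x‖ := by
  have h1 : ‖uu a k‖ ≤ 1 :=
    sa_unit_norm a hCAR₁d hCAR₁o hCAR₂ (uu_sa a k) (uu_sq a hCAR₁d hCAR₁o hCAR₂ k)
  have h2 : ‖wL a k (tl F k)‖ ≤ 1 :=
    sa_unit_norm a hCAR₁d hCAR₁o hCAR₂ (wL_sa a hCAR₁d hCAR₁o hCAR₂ (tl_not_mem F k))
      (wL_sq a hCAR₁d hCAR₁o hCAR₂ (tl_not_mem F k))
  exact (cavg_norm h2 _).trans (cavg_norm h1 x)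

lemma QLf_sub (L : List σ) (F : Finset σ) (x y : A) :
    QLf a L F (x - y) = QLf a L F x - QLf a L F y := by
  induction L generalizing x y with
  | nil => simp
  | cons k L ih => rw [QLf_cons, QLf_cons, QLf_cons, Q_sub a hCAR₁d hCAR₁o hCAR₂, ih]

lemma QLf_norm (L : List σ) (F : Finset σ) (x : A) : ‖QLf a L F x‖ ≤ ‖x‖ := by
  induction L generalizing x with
  | nil => simp
  | cons k L ih =>
      exact (ih _).trans (Q_norm a hCAR₁d hCAR₁o hCAR₂ k F x)

lemma QLf_mem {L : List σ} {F G : Finset σ} (hGF : G ⊆ F) {x : A} (hx : x ∈ adj a G) :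
    QLf a L F x ∈ adj a (G \ L.toFinset) := by
  induction L generalizing G x with
  | nil => simpa using hx
  | cons k L ih =>
      rw [QLf_cons]
      have h1 : QQ a k F x ∈ adj a (G.erase k) := Q_mem a hCAR₁d hCAR₁o hCAR₂ hGF hx
      have h2 := ih ((Finset.erase_subset k G).trans hGF) h1
      have h3 : (G.erase k) \ L.toFinset = G \ (k :: L).toFinset := by
        ext j
        simp only [Finset.mem_sdiff, Finset.mem_erase, List.toFinset_cons, Finset.mem_insert,
          List.mem_toFinset, not_or]
        tauto
      rwa [h3] at h2

lemma QLf_filter {L : List σ} (hnd : L.Nodup) {F G : Finset σ} (hGF : G ⊆ F) {x : A}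
    (hx : x ∈ adj a G) :
    QLf a L F x = QLf a (L.filter (· ∈ G)) F x := by
  induction L generalizing G x with
  | nil => simp
  | cons k L ih =>
      have hknL : k ∉ L := (List.nodup_cons.mp hnd).1
      have hndL : L.Nodup := (List.nodup_cons.mp hnd).2
      by_cases hkG : k ∈ G
      · rw [QLf_cons, List.filter_cons_of_pos (by simpa using hkG), QLf_cons]
        have h1 : QQ a k F x ∈ adj a (G.erase k) := Q_mem a hCAR₁d hCAR₁o hCAR₂ hGF hx
        have h2 := ih hndL ((Finset.erase_subset k G).trans hGF) h1
        rw [h2]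
        congr 1
        refine List.filter_congr (fun j hj => ?_)
        have hjk : j ≠ k := fun e => hknL (e ▸ hj)
        simp [Finset.mem_erase, hjk]
      · rw [QLf_cons, Q_id a hCAR₁d hCAR₁o hCAR₂ hGF hkG hx,
          List.filter_cons_of_neg (by simpa using hkG)]
        exact ih hndL hGF hx

lemma QLf_indep {M : List σ} {F F' G : Finset σ} (hGF : G ⊆ F) (hGF' : G ⊆ F') {x : A}
    (hx : x ∈ adj a G) : QLf a M F x = QLf a M F' x := by
  induction M generalizing G x with
  | nil => simp
  | cons k M ih =>
      rw [QLf_cons, QLf_cons, Q_indep a hCAR₁d hCAR₁o hCAR₂ hGF hGF' hx]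
      exact ih ((Finset.erase_subset k G).trans hGF) ((Finset.erase_subset k G).trans hGF')
        (Q_mem a hCAR₁d hCAR₁o hCAR₂ hGF' hx)

lemma cavg_trace (τ : A →L[ℂ] ℂ) (htr : ∀ x y : A, τ (x * y) = τ (y * x)) {g b : A}
    (hsq : g * g = 1) (hgb : g * b = b * g) (x : A) :
    τ (cavg g x * b) = τ (x * b) := by
  rw [cavg, smul_mul_assoc, map_smul, add_mul, map_add]
  have h1 : τ (g * x * g * b) = τ (x * b) := by
    have e1 : g * x * g * b = g * (x * (g * b)) := by simp only [mul_assoc]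
    have e2 : x * (g * b) * g = x * b := by
      rw [hgb, mul_assoc, mul_assoc, hsq, mul_one]
    rw [e1, htr g (x * (g * b)), e2]
  rw [h1]
  rw [show τ (x * b) + τ (x * b) = (2:ℂ) * τ (x * b) from by ring]
  rw [smul_eq_mul, ← mul_assoc]
  norm_num

lemma Q_trace (τ : A →L[ℂ] ℂ) (htr : ∀ x y : A, τ (x * y) = τ (y * x)) {k : σ}
    {F H : Finset σ} (hHF : H ⊆ F) (hkH : k ∉ H) {b : A} (hb : b ∈ adj a H) (x : A) :
    τ (QQ a k F x * b) = τ (x * b) := by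
  rw [QQ]
  rw [cavg_trace a hCAR₁d hCAR₁o hCAR₂ τ htr (wL_sq a hCAR₁d hCAR₁o hCAR₂ (tl_not_mem F k))
    (wL_comm_adj a hCAR₁d hCAR₁o hCAR₂ hHF hkH b hb)]
  rw [cavg_trace a hCAR₁d hCAR₁o hCAR₂ τ htr (uu_sq a hCAR₁d hCAR₁o hCAR₂ k)
    (uu_comm_adj a hCAR₁d hCAR₁o hCAR₂ hkH b hb)]

lemma QLf_trace (τ : A →L[ℂ] ℂ) (htr : ∀ x y : A, τ (x * y) = τ (y * x)) {L : List σ}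
    {F H : Finset σ} (hHF : H ⊆ F) (hLH : ∀ k ∈ L, k ∉ H) {b : A} (hb : b ∈ adj a H)
    (x : A) : τ (QLf a L F x * b) = τ (x * b) := by
  induction L generalizing x with
  | nil => simp
  | cons k L ih =>
      rw [QLf_cons, ih (fun j hj => hLH j (List.mem_cons_of_mem k hj))]
      exact Q_trace a hCAR₁d hCAR₁o hCAR₂ τ htr hHF (hLH k (List.mem_cons_self (a := k) (l := L))) hb x

end QLSec

noncomputable def offI (I : Set σ) (G : Finset σ) : Finset σ :=
  @Finset.filter σ (fun s => s ∉ I) (Classical.decPred _) G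

noncomputable def onI (I : Set σ) (G : Finset σ) : Finset σ :=
  @Finset.filter σ (fun s => s ∈ I) (Classical.decPred _) G

lemma mem_offI {I : Set σ} {G : Finset σ} {j : σ} : j ∈ offI I G ↔ j ∈ G ∧ j ∉ I := by
  simp [offI, Finset.mem_filter]

lemma mem_onI {I : Set σ} {G : Finset σ} {j : σ} : j ∈ onI I G ↔ j ∈ G ∧ j ∈ I := by
  simp [onI, Finset.mem_filter]

lemma sdiff_offI (I : Set σ) (G : Finset σ) : G \ offI I G = onI I G := by
  ext j
  simp only [Finset.mem_sdiff, mem_offI, mem_onI, not_and, not_not]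
  tauto

noncomputable def sortD (I : Set σ) (G : Finset σ) : List σ := (offI I G).sort (· ≤ ·)

lemma sortD_nodup (I : Set σ) (G : Finset σ) : (sortD I G).Nodup := Finset.sort_nodup _ _

lemma mem_sortD {I : Set σ} {G : Finset σ} {j : σ} :
    j ∈ sortD I G ↔ j ∈ G ∧ j ∉ I := by
  simp [sortD, Finset.mem_sort, mem_offI]

lemma sortD_toFinset (I : Set σ) (G : Finset σ) : (sortD I G).toFinset = offI I G := by
  ext j
  simp [List.mem_toFinset, mem_sortD, mem_offI]

lemma filter_sortD {I : Set σ} {G F : Finset σ} (hGF : G ⊆ F) :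
    (sortD I F).filter (· ∈ G) = sortD I G := by
  haveI : IsAntisymm σ (· ≤ ·) := ⟨fun _ _ h h' => le_antisymm h h'⟩
  refine (fun h1 h2 h3 => List.Perm.eq_of_pairwise' (r := (· ≤ ·)) h2 h3 h1) ?_ ?_ ?_
  · refine (List.perm_ext_iff_of_nodup ((sortD_nodup I F).filter _) (sortD_nodup I G)).mpr
      (fun j => ?_)
    simp only [List.mem_filter, mem_sortD, decide_eq_true_eq]
    constructor
    · rintro ⟨⟨hF, hnI⟩, hG⟩; exact ⟨hG, hnI⟩
    · rintro ⟨hG, hnI⟩; exact ⟨⟨hGF hG, hnI⟩, hG⟩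
  · exact (Finset.pairwise_sort _ _).filter _
  · exact Finset.pairwise_sort _ _

noncomputable def EF (I : Set σ) (F : Finset σ) (x : A) : A := QLf a (sortD I F) F x

section EFSec
include hCAR₁d hCAR₁o hCAR₂

lemma EF_poly {I : Set σ} {G F : Finset σ} (hGF : G ⊆ F) {x : A} (hx : x ∈ adj a G) :
    EF a I F x = QLf a (sortD I G) G x := by
  rw [EF, QLf_filter a hCAR₁d hCAR₁o hCAR₂ (sortD_nodup I F) hGF hx, filter_sortD hGF]
  exact QLf_indep a hCAR₁d hCAR₁o hCAR₂ hGF (le_refl G) hx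

lemma EF_indep {I : Set σ} {G F F' : Finset σ} (hGF : G ⊆ F) (hGF' : G ⊆ F') {x : A}
    (hx : x ∈ adj a G) : EF a I F x = EF a I F' x := by
  rw [EF_poly a hCAR₁d hCAR₁o hCAR₂ hGF hx, EF_poly a hCAR₁d hCAR₁o hCAR₂ hGF' hx]

lemma EF_mem {I : Set σ} {G F : Finset σ} (hGF : G ⊆ F) {x : A} (hx : x ∈ adj a G) :
    EF a I F x ∈ adj a (onI I G) := by
  rw [EF_poly a hCAR₁d hCAR₁o hCAR₂ hGF hx]
  have h := QLf_mem a hCAR₁d hCAR₁o hCAR₂ (le_refl G) hx (L := sortD I G)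
  rwa [sortD_toFinset, sdiff_offI] at h

lemma EF_sub (I : Set σ) (F : Finset σ) (x y : A) :
    EF a I F (x - y) = EF a I F x - EF a I F y := QLf_sub a hCAR₁d hCAR₁o hCAR₂ _ _ _ _

lemma EF_norm (I : Set σ) (F : Finset σ) (x : A) : ‖EF a I F x‖ ≤ ‖x‖ :=
  QLf_norm a hCAR₁d hCAR₁o hCAR₂ _ _ _

lemma EF_trace (τ : A →L[ℂ] ℂ) (htr : ∀ x y : A, τ (x * y) = τ (y * x)) {I : Set σ}
    {F H : Finset σ} (hHF : H ⊆ F) (hHI : (H : Set σ) ⊆ I) {b : A} (hb : b ∈ adj a H)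
    (x : A) : τ (EF a I F x * b) = τ (x * b) := by
  refine QLf_trace a hCAR₁d hCAR₁o hCAR₂ τ htr hHF (fun k hk hkH => ?_) hb x
  exact (mem_sortD.mp hk).2 (hHI hkH)

end EFSec

lemma adj_le_adjoin {Iset : Set σ} {G : Finset σ} (h : (G : Set σ) ⊆ Iset) :
    adj a G ≤ StarAlgebra.adjoin ℂ (a '' Iset) :=
  StarAlgebra.adjoin_le ((Set.image_mono (f := a) h).trans (StarAlgebra.subset_adjoin ℂ _))

lemma exists_finset_of_mem_adjoin {Iset : Set σ} {x : A}
    (hx : x ∈ StarAlgebra.adjoin ℂ (a '' Iset)) :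
    ∃ G : Finset σ, (G : Set σ) ⊆ Iset ∧ x ∈ adj a G := by
  induction hx using StarAlgebra.adjoin_induction with
  | mem y hy =>
      obtain ⟨j, hj, rfl⟩ := hy
      exact ⟨{j}, by simpa using hj, gen_mem_adj a (Finset.mem_singleton_self j)⟩
  | algebraMap r => exact ⟨∅, by simp, algebraMap_mem _ r⟩
  | add x y hx hy ihx ihy =>
      obtain ⟨G₁, hG₁, hm₁⟩ := ihx
      obtain ⟨G₂, hG₂, hm₂⟩ := ihy
      refine ⟨G₁ ∪ G₂, ?_, add_mem (adj_mono a Finset.subset_union_left hm₁)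
        (adj_mono a Finset.subset_union_right hm₂)⟩
      intro j hj
      rcases Finset.mem_union.mp (by exact_mod_cast hj) with h | h
      · exact hG₁ h
      · exact hG₂ h
  | mul x y hx hy ihx ihy =>
      obtain ⟨G₁, hG₁, hm₁⟩ := ihx
      obtain ⟨G₂, hG₂, hm₂⟩ := ihy
      refine ⟨G₁ ∪ G₂, ?_, mul_mem (adj_mono a Finset.subset_union_left hm₁)
        (adj_mono a Finset.subset_union_right hm₂)⟩
      intro j hj
      rcases Finset.mem_union.mp (by exact_mod_cast hj) with h | h
      · exact hG₁ h
      · exact hG₂ h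
  | star x hx ihx =>
      obtain ⟨G₁, hG₁, hm₁⟩ := ihx
      exact ⟨G₁, hG₁, star_mem hm₁⟩

noncomputable def enumF (e : ℕ → σ) (n : ℕ) : Finset σ := (Finset.range n).image e

lemma enumF_mono (e : ℕ → σ) {m n : ℕ} (h : m ≤ n) : enumF e m ⊆ enumF e n :=
  Finset.image_subset_image (Finset.range_subset_range.mpr h)

lemma exists_enumF_superset {e : ℕ → σ} (he : Function.Surjective e) (G : Finset σ) :
    ∃ N : ℕ, ∀ n, N ≤ n → G ⊆ enumF e n := by
  classical
  set g : σ → ℕ := fun j => Nat.find (he j) with hg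
  refine ⟨G.sup g + 1, fun n hn j hj => ?_⟩
  have h1 : e (g j) = j := Nat.find_spec (he j)
  have h2 : g j < n :=
    lt_of_lt_of_le (Nat.lt_succ_of_le (Finset.le_sup (f := g) hj)) hn
  exact Finset.mem_image.mpr ⟨g j, Finset.mem_range.mpr h2, h1⟩

include hCAR₁d hCAR₁o hCAR₂ in
theorem exists_condexp [Countable σ] [Nonempty σ]
    (hgen : (StarAlgebra.adjoin ℂ (a '' (Set.univ : Set σ))).topologicalClosure = ⊤)
    (τ : A →L[ℂ] ℂ) (htr : ∀ x y : A, τ (x * y) = τ (y * x)) (I : Set σ) :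
    ∃ E : A → A,
      (∀ x : A, ∀ b ∈ (StarAlgebra.adjoin ℂ (a '' I)).topologicalClosure,
        τ (x * b) = τ (E x * b)) ∧
      (∀ J : Set σ, ∀ x ∈ (StarAlgebra.adjoin ℂ (a '' J)).topologicalClosure,
        E x ∈ (StarAlgebra.adjoin ℂ (a '' (I ∩ J))).topologicalClosure) := by
  obtain ⟨e, he⟩ := exists_surjective_nat σ
  set Fn : ℕ → Finset σ := enumF e with hFn
  -- density
  have hdense : ∀ (x : A) (ε : ℝ), 0 < ε → ∃ (G : Finset σ) (p : A), p ∈ adj a G ∧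
      ‖x - p‖ < ε := by
    intro x ε hε
    have hx : x ∈ closure ((StarAlgebra.adjoin ℂ (a '' (Set.univ : Set σ)) : Set A)) := by
      have h : x ∈ (StarAlgebra.adjoin ℂ (a '' (Set.univ : Set σ))).topologicalClosure := by
        rw [hgen]; trivial
      rw [← SetLike.mem_coe, StarSubalgebra.topologicalClosure_coe] at h
      exact h
    obtain ⟨p, hp, hdist⟩ := Metric.mem_closure_iff.mp hx ε hε
    obtain ⟨G, _, hpG⟩ := exists_finset_of_mem_adjoin a hp
    exact ⟨G, p, hpG, by rwa [dist_eq_norm] at hdist⟩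
  -- Cauchy
  have hcauchy : ∀ x : A, CauchySeq (fun n => EF a I (Fn n) x) := by
    intro x
    rw [Metric.cauchySeq_iff]
    intro ε hε
    obtain ⟨G, p, hpG, hxp⟩ := hdense x (ε / 3) (by linarith)
    obtain ⟨N, hN⟩ := exists_enumF_superset he G
    refine ⟨N, fun m hm n hn => ?_⟩
    have hGm : G ⊆ Fn m := hN m hm
    have hGn : G ⊆ Fn n := hN n hn
    have heq : EF a I (Fn m) p = EF a I (Fn n) p :=
      EF_indep a hCAR₁d hCAR₁o hCAR₂ hGm hGn hpG
    have key : EF a I (Fn m) x - EF a I (Fn n) x =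
        EF a I (Fn m) (x - p) - EF a I (Fn n) (x - p) := by
      rw [EF_sub a hCAR₁d hCAR₁o hCAR₂, EF_sub a hCAR₁d hCAR₁o hCAR₂, heq]
      abel
    rw [dist_eq_norm, key]
    calc ‖EF a I (Fn m) (x - p) - EF a I (Fn n) (x - p)‖
        ≤ ‖EF a I (Fn m) (x - p)‖ + ‖EF a I (Fn n) (x - p)‖ := norm_sub_le _ _
      _ ≤ ‖x - p‖ + ‖x - p‖ := add_le_add (EF_norm a hCAR₁d hCAR₁o hCAR₂ _ _ _)
          (EF_norm a hCAR₁d hCAR₁o hCAR₂ _ _ _)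
      _ < ε := by linarith
  have hconv : ∀ x : A, ∃ l : A, Filter.Tendsto (fun n => EF a I (Fn n) x)
      Filter.atTop (nhds l) := fun x => cauchySeq_tendsto_of_complete (hcauchy x)
  choose E hE using hconv
  -- polynomial evaluation
  have hpoly : ∀ (G : Finset σ) (p : A), p ∈ adj a G → ∀ N : ℕ, G ⊆ Fn N →
      E p = EF a I (Fn N) p := by
    intro G p hpG N hGN
    have hev : ∀ n, N ≤ n → EF a I (Fn n) p = EF a I (Fn N) p := fun n hn =>
      EF_indep a hCAR₁d hCAR₁o hCAR₂ ((hGN.trans (enumF_mono e hn))) hGN hpG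
    have ht : Filter.Tendsto (fun n => EF a I (Fn n) p) Filter.atTop
        (nhds (EF a I (Fn N) p)) := by
      refine Filter.Tendsto.congr' ?_ tendsto_const_nhds
      filter_upwards [Filter.eventually_ge_atTop N] with n hn
      exact (hev n hn).symm
    exact tendsto_nhds_unique (hE p) ht
  -- Lipschitz
  have hlip : ∀ x y : A, ‖E x - E y‖ ≤ ‖x - y‖ := by
    intro x y
    have ht : Filter.Tendsto (fun n => ‖EF a I (Fn n) x - EF a I (Fn n) y‖) Filter.atTop
        (nhds ‖E x - E y‖) := ((hE x).sub (hE y)).norm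
    refine le_of_tendsto ht ?_
    filter_upwards with n
    rw [← EF_sub a hCAR₁d hCAR₁o hCAR₂]
    exact EF_norm a hCAR₁d hCAR₁o hCAR₂ _ _ _
  have hcont : Continuous E := by
    rw [Metric.continuous_iff]
    intro x ε hε
    exact ⟨ε, hε, fun y hy => by
      rw [dist_eq_norm] at *
      exact lt_of_le_of_lt (hlip y x) hy⟩
  refine ⟨E, ?_, ?_⟩
  · -- trace property
    have stage1 : ∀ (x : A) (H : Finset σ), (H : Set σ) ⊆ I → ∀ b ∈ adj a H,
        τ (x * b) = τ (E x * b) := by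
      intro x H hHI b hb
      obtain ⟨N, hN⟩ := exists_enumF_superset he H
      have hev : ∀ n, N ≤ n → τ (EF a I (Fn n) x * b) = τ (x * b) := fun n hn =>
        EF_trace a hCAR₁d hCAR₁o hCAR₂ τ htr (hN n hn) hHI hb x
      have ht : Filter.Tendsto (fun n => τ (EF a I (Fn n) x * b)) Filter.atTop
          (nhds (τ (E x * b))) := by
        have h1 : Filter.Tendsto (fun n => EF a I (Fn n) x * b) Filter.atTop
            (nhds (E x * b)) := (hE x).mul tendsto_const_nhds
        exact (τ.continuous.tendsto _).comp h1
      have ht2 : Filter.Tendsto (fun n => τ (EF a I (Fn n) x * b)) Filter.atTop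
          (nhds (τ (x * b))) := by
        refine Filter.Tendsto.congr' ?_ tendsto_const_nhds
        filter_upwards [Filter.eventually_ge_atTop N] with n hn
        exact (hev n hn).symm
      exact (tendsto_nhds_unique ht2 ht)
    intro x b hb
    have hb' : b ∈ closure ((StarAlgebra.adjoin ℂ (a '' I) : Set A)) := by
      rw [← SetLike.mem_coe, StarSubalgebra.topologicalClosure_coe] at hb
      exact hb
    obtain ⟨u, hu, hub⟩ := mem_closure_iff_seq_limit.mp hb'
    have hterm : ∀ n, τ (x * u n) = τ (E x * u n) := by
      intro n
      obtain ⟨H, hHI, hmem⟩ := exists_finset_of_mem_adjoin a (hu n)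
      exact stage1 x H hHI (u n) hmem
    have t1 : Filter.Tendsto (fun n => τ (x * u n)) Filter.atTop (nhds (τ (x * b))) :=
      (τ.continuous.tendsto _).comp ((tendsto_const_nhds.mul hub))
    have t2 : Filter.Tendsto (fun n => τ (E x * u n)) Filter.atTop
        (nhds (τ (E x * b))) :=
      (τ.continuous.tendsto _).comp ((tendsto_const_nhds.mul hub))
    exact tendsto_nhds_unique (t1.congr hterm) t2
  · -- localization property
    intro J x hx
    have hpoly_loc : ∀ p ∈ StarAlgebra.adjoin ℂ (a '' J),
        E p ∈ (StarAlgebra.adjoin ℂ (a '' (I ∩ J))).topologicalClosure := by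
      intro p hp
      obtain ⟨G, hGJ, hpG⟩ := exists_finset_of_mem_adjoin a hp
      obtain ⟨N, hN⟩ := exists_enumF_superset he G
      rw [hpoly G p hpG N (hN N le_rfl)]
      have h1 : EF a I (Fn N) p ∈ adj a (onI I G) :=
        EF_mem a hCAR₁d hCAR₁o hCAR₂ (hN N le_rfl) hpG
      have h2 : ((onI I G : Finset σ) : Set σ) ⊆ I ∩ J := by
        intro j hj
        have := mem_onI.mp (by exact_mod_cast hj)
        exact ⟨this.2, hGJ (by exact_mod_cast this.1)⟩
      exact (StarSubalgebra.le_topologicalClosure _) ((adj_le_adjoin a h2) h1)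
    have hx' : x ∈ closure ((StarAlgebra.adjoin ℂ (a '' J) : Set A)) := by
      rw [← SetLike.mem_coe, StarSubalgebra.topologicalClosure_coe] at hx
      exact hx
    obtain ⟨u, hu, hux⟩ := mem_closure_iff_seq_limit.mp hx'
    have hclosed : IsClosed ((StarAlgebra.adjoin ℂ (a '' (I ∩ J))).topologicalClosure :
        Set A) := StarSubalgebra.isClosed_topologicalClosure _
    have htEu : Filter.Tendsto (fun n => E (u n)) Filter.atTop (nhds (E x)) :=
      ((hcont.tendsto x).comp hux)
    refine hclosed.mem_of_tendsto htEu ?_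
    filter_upwards with n
    exact hpoly_loc (u n) (hu n)

end CARProof

/-- The C*-subalgebra `A(I)` of the CAR algebra associated to a region `I ⊆ ℤ^ν`. -/
noncomputable def carSub {ν : ℕ} {A : Type*} [CStarAlgebra A]
    (a : (Fin ν → ℤ) → A) (I : Set (Fin ν → ℤ)) : StarSubalgebra ℂ A :=
  (StarAlgebra.adjoin ℂ (a '' I)).topologicalClosure

/-- `E` is the `τ`-preserving conditional expectation of the CAR algebra onto `A(I)`:
`E x ∈ A(I)` and `τ (x * b) = τ (E x * b)` for all `b ∈ A(I)`. -/
def IsCondExp {ν : ℕ} {A : Type*} [CStarAlgebra A]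
    (a : (Fin ν → ℤ) → A) (τ : A →L[ℂ] ℂ) (I : Set (Fin ν → ℤ)) (E : A → A) : Prop :=
  (∀ x : A, E x ∈ carSub a I) ∧ ∀ x : A, ∀ b ∈ carSub a I, τ (x * b) = τ (E x * b)

/-- For the CAR algebra `A` over `ℤ^ν` with unique tracial state `τ`: for
every subset `I ⊆ ℤ^ν` there exists a unique conditional expectation `E_I : A → A(I)` with
`τ (x * b) = τ (E_I x * b)` for all `b ∈ A(I)`; moreover for any two subsets `I`, `J` one has
`E_I (A(J)) ⊆ A(I ∩ J)` and `E_I ∘ E_J = E_J ∘ E_I = E_{I∩J}`. -/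
theorem car_conditional_expectations_exist_unique_and_commute
    {ν : ℕ} {A : Type*} [CStarAlgebra A]
    (a : (Fin ν → ℤ) → A)
    (hCAR₁ : ∀ i j, star (a i) * a j + a j * star (a i) = if i = j then (1 : A) else 0)
    (hCAR₂ : ∀ i j, a i * a j + a j * a i = 0)
    (hgen : carSub a Set.univ = ⊤)
    (τ : A →L[ℂ] ℂ)
    (hτ1 : τ 1 = 1)
    (hτpos : ∀ x : A, 0 ≤ τ (star x * x))
    (hτtracial : ∀ x y : A, τ (x * y) = τ (y * x))
    (hτfaithful : ∀ x : A, τ (star x * x) = 0 → x = 0) :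
    (∀ I : Set (Fin ν → ℤ), ∃! E : A → A, IsCondExp a τ I E) ∧
    (∀ (I J : Set (Fin ν → ℤ)) (EI EJ EIJ : A → A),
      IsCondExp a τ I EI → IsCondExp a τ J EJ → IsCondExp a τ (I ∩ J) EIJ →
        (∀ x ∈ carSub a J, EI x ∈ carSub a (I ∩ J)) ∧
        (∀ x : A, EI (EJ x) = EIJ x) ∧ (∀ x : A, EJ (EI x) = EIJ x)) := by

  classical
  obtain ⟨f, hf⟩ := exists_injective_nat (Fin ν → ℤ)
  letI : LinearOrder (Fin ν → ℤ) := LinearOrder.lift' f hf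
  have hgen' : (StarAlgebra.adjoin ℂ (a '' (Set.univ : Set (Fin ν → ℤ)))).topologicalClosure
      = ⊤ := hgen
  have hCAR₁d : ∀ i, star (a i) * a i + a i * star (a i) = 1 := by
    intro i
    have := hCAR₁ i i
    rwa [if_pos rfl] at this
  have hCAR₁o : ∀ i j : Fin ν → ℤ, i ≠ j →
      star (a i) * a j + a j * star (a i) = 0 := by
    intro i j h
    have := hCAR₁ i j
    rwa [if_neg h] at this
  -- monotonicity of carSub
  have hmono : ∀ (I J : Set (Fin ν → ℤ)), I ⊆ J → carSub a I ≤ carSub a J := by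
    intro I J h
    exact StarSubalgebra.topologicalClosure_mono (StarAlgebra.adjoin_le
      ((Set.image_mono (f := a) h).trans (StarAlgebra.subset_adjoin _ _)))
  -- canonical conditional expectations with localization
  have hcanon : ∀ I : Set (Fin ν → ℤ), ∃ E : A → A, IsCondExp a τ I E ∧
      (∀ J : Set (Fin ν → ℤ), ∀ x ∈ carSub a J, E x ∈ carSub a (I ∩ J)) := by
    intro I
    obtain ⟨E, hEtr, hEloc⟩ := CARProof.exists_condexp a hCAR₁d hCAR₁o hCAR₂ hgen' τ hτtracial I
    have hmemI : ∀ x : A, E x ∈ carSub a I := by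
      intro x
      have hx : x ∈ (StarAlgebra.adjoin ℂ
          (a '' (Set.univ : Set (Fin ν → ℤ)))).topologicalClosure := by
        rw [hgen']; trivial
      have := hEloc Set.univ x hx
      rw [Set.inter_univ] at this
      exact this
    exact ⟨E, ⟨hmemI, fun x b hb => hEtr x b hb⟩, fun J x hx => hEloc J x hx⟩
  -- uniqueness
  have huniq : ∀ (I : Set (Fin ν → ℤ)) (E E' : A → A), IsCondExp a τ I E →
      IsCondExp a τ I E' → E = E' := by
    intro I E E' hE hE'
    funext x
    have hy : E x - E' x ∈ carSub a I := sub_mem (hE.1 x) (hE'.1 x)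
    have h1 : ∀ b ∈ carSub a I, τ ((E x - E' x) * b) = 0 := by
      intro b hb
      rw [sub_mul, map_sub, ← hE.2 x b hb, ← hE'.2 x b hb, sub_self]
    have h2 : τ ((E x - E' x) * star (E x - E' x)) = 0 := h1 _ (star_mem hy)
    have h3 : τ (star (star (E x - E' x)) * star (E x - E' x)) = 0 := by
      rwa [star_star]
    have h4 : star (E x - E' x) = 0 := hτfaithful _ h3
    have h5 : E x - E' x = 0 := by
      have := congrArg star h4
      rwa [star_star, star_zero] at this
    exact sub_eq_zero.mp h5
  have main : ∀ I : Set (Fin ν → ℤ), ∃! E : A → A, IsCondExp a τ I E := by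
    intro I
    obtain ⟨E, hE, _⟩ := hcanon I
    exact ⟨E, hE, fun E' hE' => huniq I E' E hE' hE⟩
  refine ⟨main, ?_⟩
  intro I J EI EJ EIJ hEI hEJ hEIJ
  obtain ⟨E₁, hE₁, hE₁loc⟩ := hcanon I
  obtain ⟨E₂, hE₂, hE₂loc⟩ := hcanon J
  have hEIeq : EI = E₁ := huniq I EI E₁ hEI hE₁
  have hEJeq : EJ = E₂ := huniq J EJ E₂ hEJ hE₂
  have hrange : ∀ x ∈ carSub a J, EI x ∈ carSub a (I ∩ J) := by
    intro x hx
    rw [hEIeq]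
    exact hE₁loc J x hx
  refine ⟨hrange, ?_, ?_⟩
  · -- EI ∘ EJ = EIJ
    have hcomp : IsCondExp a τ (I ∩ J) (fun x => EI (EJ x)) := by
      constructor
      · intro x
        exact hrange (EJ x) (hEJ.1 x)
      · intro x b hb
        have hbI : b ∈ carSub a I := hmono _ _ Set.inter_subset_left hb
        have hbJ : b ∈ carSub a J := hmono _ _ Set.inter_subset_right hb
        calc τ (x * b) = τ (EJ x * b) := hEJ.2 x b hbJ
          _ = τ (EI (EJ x) * b) := hEI.2 (EJ x) b hbI
    intro x
    exact congrFun (huniq (I ∩ J) (fun x => EI (EJ x)) EIJ hcomp hEIJ) x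
  · -- EJ ∘ EI = EIJ
    have hrange' : ∀ x ∈ carSub a I, EJ x ∈ carSub a (I ∩ J) := by
      intro x hx
      rw [hEJeq]
      have := hE₂loc I x hx
      rwa [Set.inter_comm J I] at this
    have hcomp : IsCondExp a τ (I ∩ J) (fun x => EJ (EI x)) := by
      constructor
      · intro x
        exact hrange' (EI x) (hEI.1 x)
      · intro x b hb
        have hbI : b ∈ carSub a I := hmono _ _ Set.inter_subset_left hb
        have hbJ : b ∈ carSub a J := hmono _ _ Set.inter_subset_right hb
        calc τ (x * b) = τ (EI x * b) := hEI.2 x b hbI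
          _ = τ (EJ (EI x) * b) := hEJ.2 (EI x) b hbJ
    intro x
    exact congrFun (huniq (I ∩ J) (fun x => EJ (EI x)) EIJ hcomp hEIJ) x
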